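/- Let M be a Hermitian positive semidefinite matrix all of whose nonzero eigenvalues are at least μ > 0, and let 0 < ε < 1/2. If Z is a Hermitian matrix with Z ≈_ε (M + εμI)⁻¹, then for any b in the range of M with M x = b, one has ‖x - Z b‖²_M ≤ 6ε ‖x‖²_M, where ‖v‖²_M = v* M v. -/

import Mathlib

open Matrix
open scoped ComplexOrder

/-- Cauchy–Schwarz inequality for a positive semidefinite matrix. -/
lemma cs_psd {n : Type*} [Fintype n] [DecidableEq n] {Z : Matrix n n ℂ} (hZ : Z.PosSemidef)
    (u v : n → ℂ) :
    ‖star u ⬝ᵥ Z *ᵥ v‖ ≤ Real.sqrt (star u ⬝ᵥ Z *ᵥ u).re * Real.sqrt (star v ⬝ᵥ Z *ᵥ v).re := by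
  obtain ⟨B, rfl⟩ : ∃ B : Matrix n n ℂ, Z = Bᴴ * B := by
    open scoped MatrixOrder in exact CStarAlgebra.nonneg_iff_eq_star_mul_self.mp hZ.nonneg
  have key : ∀ a c : n → ℂ, star a ⬝ᵥ (Bᴴ * B) *ᵥ c = star (B *ᵥ a) ⬝ᵥ (B *ᵥ c) := by
    intro a c
    rw [← Matrix.mulVec_mulVec, Matrix.dotProduct_mulVec, ← Matrix.star_mulVec]
  rw [key u v, key u u, key v v]
  set a := B *ᵥ u
  set c := B *ᵥ v
  have h1 : star a ⬝ᵥ c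
      = @inner ℂ _ _ ((WithLp.equiv 2 (n → ℂ)).symm a) ((WithLp.equiv 2 (n → ℂ)).symm c) :=
    (dotProduct_comm _ _).trans (EuclideanSpace.inner_toLp_toLp a c).symm
  have h2 : ∀ w : n → ℂ, Real.sqrt (star w ⬝ᵥ w).re = ‖(WithLp.equiv 2 (n → ℂ)).symm w‖ := by
    intro w
    rw [@norm_eq_sqrt_re_inner ℂ]
    show _ = √(RCLike.re (@inner ℂ _ _ (WithLp.toLp 2 w) (WithLp.toLp 2 w)))
    rw [EuclideanSpace.inner_toLp_toLp, dotProduct_comm]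
    rfl
  rw [h1, h2, h2]
  exact norm_inner_le_norm _ _

/-- Quadratic form of a conjugated diagonal matrix. -/
lemma conj_form {n : Type*} [Fintype n] [DecidableEq n] (U : Matrix n n ℂ) (c : n → ℝ)
    (x : n → ℂ) :
    (star x ⬝ᵥ (U * diagonal (fun i => (c i : ℂ)) * star U) *ᵥ x).re
      = ∑ i, c i * Complex.normSq ((star U *ᵥ x) i) := by
  set y := star U *ᵥ x with hy
  have h1 : (U * diagonal (fun i => (c i : ℂ)) * star U) *ᵥ x
      = U *ᵥ (diagonal (fun i => (c i : ℂ)) *ᵥ y) := by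
    rw [hy, Matrix.mulVec_mulVec, Matrix.mulVec_mulVec, Matrix.star_eq_conjTranspose]
  have h1b : star x ᵥ* U = star y := by
    rw [hy, Matrix.star_mulVec, Matrix.star_eq_conjTranspose, Matrix.conjTranspose_conjTranspose]
  rw [h1, Matrix.dotProduct_mulVec, h1b]
  have h2 : ∀ i, (starRingEnd ℂ) (y i) * (diagonal (fun i => (c i : ℂ)) *ᵥ y) i
      = ((c i : ℂ) * (Complex.normSq (y i) : ℂ)) := by
    intro i
    rw [Matrix.mulVec_diagonal]
    rw [mul_comm ((starRingEnd ℂ) (y i)), mul_assoc, Complex.mul_conj]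
  unfold dotProduct
  rw [Complex.re_sum]
  refine Finset.sum_congr rfl fun i _ => ?_
  rw [Pi.star_apply]
  show ((starRingEnd ℂ) (y i) * _).re = _
  rw [h2 i, ← Complex.ofReal_mul, Complex.ofReal_re]

lemma conj_mul_conj {n : Type*} [Fintype n] [DecidableEq n] {U : Matrix n n ℂ}
    (hU : star U * U = 1) (D E : Matrix n n ℂ) :
    (U * D * star U) * (U * E * star U) = U * (D * E) * star U := by
  calc (U * D * star U) * (U * E * star U) = U * D * (star U * U) * E * star U := by
        simp only [Matrix.mul_assoc]
      _ = U * (D * E) * star U := by rw [hU]; simp only [Matrix.mul_one, Matrix.mul_assoc]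

/-- Moving a Hermitian matrix across a dot product. -/
lemma herm_left {n : Type*} [Fintype n] {A : Matrix n n ℂ} (hA : A.IsHermitian)
    (u v : n → ℂ) : star (A *ᵥ u) ⬝ᵥ v = star u ⬝ᵥ (A *ᵥ v) := by
  rw [Matrix.star_mulVec, hA.eq, ← Matrix.dotProduct_mulVec]

lemma herm_sandwich {n : Type*} [Fintype n] {A : Matrix n n ℂ} (P : Matrix n n ℂ)
    (hA : A.IsHermitian) (x : n → ℂ) :
    star (A *ᵥ x) ⬝ᵥ P *ᵥ (A *ᵥ x) = star x ⬝ᵥ (A * P * A) *ᵥ x := by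
  rw [herm_left hA, Matrix.mulVec_mulVec, Matrix.mulVec_mulVec]

/-- Real part of the quadratic form of a PSD matrix is nonnegative. -/
lemma psd_re {n : Type*} [Fintype n] {A : Matrix n n ℂ} (hA : A.PosSemidef) (v : n → ℂ) :
    0 ≤ (star v ⬝ᵥ A *ᵥ v).re :=
  (Complex.le_def.mp (hA.dotProduct_mulVec_nonneg v)).1

set_option maxHeartbeats 1000000 in
/-- If all nonzero eigenvalues of the Hermitian PSD matrix `M` are at least `μ > 0`,
`0 < ε < 1/2`, and `Z ≈_ε (M + εμI)⁻¹`, then for any `b` with `M x = b` we have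
`‖x - Z b‖²_M ≤ 6 ε ‖x‖²_M`. -/
theorem stmt_3 {n : Type*} [Fintype n] [DecidableEq n]
    (M Z : Matrix n n ℂ) (hM : M.PosSemidef) (hZ : Z.IsHermitian)
    (μ ε : ℝ) (hμ : 0 < μ) (hε0 : 0 < ε) (hε : ε < 1 / 2)
    (heig : ∀ i, hM.1.eigenvalues i ≠ 0 → μ ≤ hM.1.eigenvalues i)
    (happrox1 : (Real.exp ε • (M + (ε * μ) • (1 : Matrix n n ℂ))⁻¹ - Z).PosSemidef)
    (happrox2 : (Z - Real.exp (-ε) • (M + (ε * μ) • (1 : Matrix n n ℂ))⁻¹).PosSemidef)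
    (x b : n → ℂ) (hxb : M.mulVec x = b) :
    (star (x - Z.mulVec b) ⬝ᵥ M.mulVec (x - Z.mulVec b)).re ≤
      6 * ε * (star x ⬝ᵥ M.mulVec x).re := by
  subst hxb
  set d : n → ℝ := hM.1.eigenvalues with hd
  set U : Matrix n n ℂ := (Matrix.IsHermitian.eigenvectorUnitary hM.1 : Matrix n n ℂ) with hU
  have hU1 : U * star U = 1 :=
    (Matrix.mem_unitaryGroup_iff).mp (Matrix.IsHermitian.eigenvectorUnitary hM.1).2
  have hU2 : star U * U = 1 :=
    (Matrix.mem_unitaryGroup_iff').mp (Matrix.IsHermitian.eigenvectorUnitary hM.1).2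
  have hd0 : ∀ i, 0 ≤ d i := fun i => hM.eigenvalues_nonneg i
  have hde : ∀ i, 0 < d i + ε * μ := fun i =>
    add_pos_of_nonneg_of_pos (hd0 i) (mul_pos hε0 hμ)
  -- the conjugation functional
  have hFmul : ∀ c₁ c₂ : n → ℝ,
      (U * diagonal (fun i => ((c₁ i : ℝ) : ℂ)) * star U)
        * (U * diagonal (fun i => ((c₂ i : ℝ) : ℂ)) * star U)
      = U * diagonal (fun i => ((c₁ i * c₂ i : ℝ) : ℂ)) * star U := by
    intro c₁ c₂
    rw [conj_mul_conj hU2, Matrix.diagonal_mul_diagonal]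
    push_cast
    rfl
  have hMF : M = U * diagonal (fun i => ((d i : ℝ) : ℂ)) * star U := by
    have := hM.1.spectral_theorem
    rw [Unitary.conjStarAlgAut_apply] at this
    exact this
  have hsm : (ε * μ) • (1 : Matrix n n ℂ) = diagonal (fun _ => ((ε * μ : ℝ) : ℂ)) := by
    ext i j
    by_cases h : i = j <;>
      simp [h, Matrix.one_apply, Matrix.diagonal_apply, Complex.real_smul]
  have hconst : diagonal (fun _ : n => ((ε * μ : ℝ) : ℂ))
      = U * diagonal (fun _ : n => ((ε * μ : ℝ) : ℂ)) * star U := by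
    have : diagonal (fun _ : n => ((ε * μ : ℝ) : ℂ)) = ((ε * μ : ℝ) : ℂ) • (1 : Matrix n n ℂ) := by
      ext i j
      by_cases h : i = j <;> simp [h, Matrix.one_apply, Matrix.diagonal_apply]
    rw [this]
    rw [Matrix.mul_smul, Matrix.mul_one, Matrix.smul_mul, hU1]
  set N : Matrix n n ℂ := M + (ε * μ) • (1 : Matrix n n ℂ) with hN
  have hNF : N = U * diagonal (fun i => ((d i + ε * μ : ℝ) : ℂ)) * star U := by
    rw [hN, hMF, hsm, hconst, ← Matrix.add_mul, ← Matrix.mul_add, Matrix.diagonal_add]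
    push_cast
    rfl
  have hWF : N⁻¹ = U * diagonal (fun i => (((d i + ε * μ)⁻¹ : ℝ) : ℂ)) * star U := by
    apply Matrix.inv_eq_right_inv
    rw [hNF, hFmul]
    have : (fun i => ((((d i + ε * μ) * (d i + ε * μ)⁻¹ : ℝ)) : ℂ)) = fun _ => (1 : ℂ) := by
      funext i
      rw [mul_inv_cancel₀ (hde i).ne']
      norm_num
    rw [this, Matrix.diagonal_one, Matrix.mul_one, hU1]
  set W := N⁻¹ with hW
  have hFherm : ∀ c : n → ℝ,
      (U * diagonal (fun i => ((c i : ℝ) : ℂ)) * star U).IsHermitian := by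
    intro c
    rw [Matrix.star_eq_conjTranspose]
    exact Matrix.isHermitian_mul_mul_conjTranspose U
      (Matrix.isHermitian_diagonal_iff.mpr fun i => Complex.conj_ofReal (c i))
  have hNherm : N.IsHermitian := hNF ▸ hFherm _
  have hFpsd : ∀ c : n → ℝ, (∀ i, 0 ≤ c i) →
      (U * diagonal (fun i => ((c i : ℝ) : ℂ)) * star U).PosSemidef := by
    intro c hc
    rw [Matrix.star_eq_conjTranspose]
    exact (Matrix.PosSemidef.diagonal (fun i => Complex.zero_le_real.mpr (hc i))
      ).mul_mul_conjTranspose_same U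
  set y : n → ℂ := star U *ᵥ x with hy
  set w : n → ℂ := Z *ᵥ (M *ᵥ x) with hw
  set X : ℝ := (star x ⬝ᵥ M *ᵥ x).re with hX
  set r : ℝ := (star (M *ᵥ x) ⬝ᵥ Z *ᵥ (M *ᵥ x)).re with hr
  set q : ℝ := (star (M *ᵥ x) ⬝ᵥ W *ᵥ (M *ᵥ x)).re with hq
  set s : ℝ := (star w ⬝ᵥ N *ᵥ w).re with hs
  have hXsum : X = ∑ i, d i * Complex.normSq (y i) := by
    have h := conj_form U d x
    rw [← hMF] at h
    rw [hX, h, hy]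
  have hqx : star (M *ᵥ x) ⬝ᵥ W *ᵥ (M *ᵥ x) = star x ⬝ᵥ (M * W * M) *ᵥ x :=
    herm_sandwich W hM.1 x
  have hMWM : M * W * M
      = U * diagonal (fun i => ((d i * (d i + ε * μ)⁻¹ * d i : ℝ) : ℂ)) * star U := by
    rw [hMF, hWF, hFmul, hFmul]
  have hqsum : q = ∑ i, (d i * (d i + ε * μ)⁻¹ * d i) * Complex.normSq (y i) := by
    rw [hq, hqx, hMWM, conj_form U (fun i => d i * (d i + ε * μ)⁻¹ * d i) x, hy]
  have hq0 : 0 ≤ q := by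
    rw [hqsum]
    refine Finset.sum_nonneg fun i _ => mul_nonneg ?_ (Complex.normSq_nonneg _)
    have := hd0 i
    have := (hde i).le
    positivity
  have hX0 : 0 ≤ X := by
    rw [hXsum]
    exact Finset.sum_nonneg fun i _ => mul_nonneg (hd0 i) (Complex.normSq_nonneg _)
  have hXq : X ≤ (1 + ε) * q := by
    rw [hXsum, hqsum, Finset.mul_sum]
    refine Finset.sum_le_sum fun i _ => ?_
    rw [← mul_assoc]
    refine mul_le_mul_of_nonneg_right ?_ (Complex.normSq_nonneg _)
    rcases eq_or_ne (d i) 0 with h | h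
    · simp [h]
    · have h1 : μ ≤ d i := heig i h
      have h2 := hde i
      have h3 : (1 + ε) * (d i * (d i + ε * μ)⁻¹ * d i)
          = ((1 + ε) * d i * d i) / (d i + ε * μ) := by
        field_simp
      rw [h3, le_div_iff₀ h2]
      nlinarith [mul_nonneg (mul_nonneg hε0.le (hd0 i)) (sub_nonneg.mpr h1), hd0 i, hμ.le]
  -- extracting real quadratic-form inequalities from the approximation hypotheses
  have happ1 : ∀ v : n → ℂ, (star v ⬝ᵥ Z *ᵥ v).re ≤ Real.exp ε * (star v ⬝ᵥ W *ᵥ v).re := by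
    intro v
    have h := psd_re happrox1 v
    have hexp : star v ⬝ᵥ (Real.exp ε • W - Z) *ᵥ v
        = Real.exp ε • (star v ⬝ᵥ W *ᵥ v) - star v ⬝ᵥ Z *ᵥ v := by
      rw [Matrix.sub_mulVec, dotProduct_sub, Matrix.smul_mulVec, dotProduct_smul]
    rw [hexp] at h
    simp only [Complex.sub_re, Complex.smul_re, smul_eq_mul] at h
    linarith
  have happ2 : ∀ v : n → ℂ, Real.exp (-ε) * (star v ⬝ᵥ W *ᵥ v).re ≤ (star v ⬝ᵥ Z *ᵥ v).re := by
    intro v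
    have h := psd_re happrox2 v
    have hexp : star v ⬝ᵥ (Z - Real.exp (-ε) • W) *ᵥ v
        = star v ⬝ᵥ Z *ᵥ v - Real.exp (-ε) • (star v ⬝ᵥ W *ᵥ v) := by
      rw [Matrix.sub_mulVec, dotProduct_sub, Matrix.smul_mulVec, dotProduct_smul]
    rw [hexp] at h
    simp only [Complex.sub_re, Complex.smul_re, smul_eq_mul] at h
    linarith
  have hr_ge : Real.exp (-ε) * q ≤ r := happ2 (M *ᵥ x)
  have hr0 : 0 ≤ r := le_trans (mul_nonneg (Real.exp_pos _).le hq0) hr_ge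
  -- Z is positive semidefinite
  have hZpsd : Z.PosSemidef := by
    have hsmW : Real.exp (-ε) • W
        = U * diagonal (fun i => ((Real.exp (-ε) * (d i + ε * μ)⁻¹ : ℝ) : ℂ)) * star U := by
      have hD : (Real.exp (-ε) • diagonal (fun i => (((d i + ε * μ)⁻¹ : ℝ) : ℂ)) : Matrix n n ℂ)
          = diagonal (fun i => ((Real.exp (-ε) * (d i + ε * μ)⁻¹ : ℝ) : ℂ)) := by
        ext i j
        rcases eq_or_ne i j with rfl | h
        · simp [Complex.real_smul]
        · simp [Matrix.diagonal_apply_ne _ h, h]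
      rw [hWF, ← Matrix.smul_mul, ← Matrix.mul_smul, hD]
    have h1 : (Real.exp (-ε) • W).PosSemidef := by
      rw [hsmW]
      exact hFpsd _ fun i => mul_nonneg (Real.exp_pos _).le (inv_nonneg.mpr (hde i).le)
    have h2 : Z = (Z - Real.exp (-ε) • W) + Real.exp (-ε) • W := by abel
    rw [h2]
    exact happrox2.add h1
  -- the Cauchy–Schwarz step : s ≤ exp ε * r
  have hNWN : N * W * N = N := by
    rw [hNF, hWF, hFmul, hFmul]
    have : (fun i => (((d i + ε * μ) * (d i + ε * μ)⁻¹ * (d i + ε * μ) : ℝ) : ℂ))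
        = fun i => ((d i + ε * μ : ℝ) : ℂ) := by
      funext i
      rw [mul_inv_cancel₀ (hde i).ne', one_mul]
    rw [this]
  have hs_eq : star (N *ᵥ w) ⬝ᵥ Z *ᵥ (M *ᵥ x) = star w ⬝ᵥ N *ᵥ w := by
    rw [← hw, herm_left hNherm]
  have hmid : (star (N *ᵥ w) ⬝ᵥ Z *ᵥ (N *ᵥ w)).re ≤ Real.exp ε * s := by
    have h := happ1 (N *ᵥ w)
    have h2 : star (N *ᵥ w) ⬝ᵥ W *ᵥ (N *ᵥ w) = star w ⬝ᵥ N *ᵥ w := by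
      rw [herm_sandwich W hNherm w, hNWN]
    rw [h2] at h
    exact h
  have hmid0 : 0 ≤ (star (N *ᵥ w) ⬝ᵥ Z *ᵥ (N *ᵥ w)).re := psd_re hZpsd _
  have hs_exp : star w ⬝ᵥ N *ᵥ w = star w ⬝ᵥ M *ᵥ w + (ε * μ) • (star w ⬝ᵥ w) := by
    rw [hN, Matrix.add_mulVec, dotProduct_add, Matrix.smul_mulVec, Matrix.one_mulVec,
      dotProduct_smul]
  have hww : 0 ≤ (star w ⬝ᵥ w).re := by
    have : star w ⬝ᵥ w = ∑ i, (Complex.normSq (w i) : ℂ) := by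
      unfold dotProduct
      refine Finset.sum_congr rfl fun i _ => ?_
      rw [Pi.star_apply, Complex.normSq_eq_conj_mul_self]
      rfl
    rw [this, Complex.re_sum]
    refine Finset.sum_nonneg fun i _ => by rw [Complex.ofReal_re]; exact Complex.normSq_nonneg _
  have hs0 : 0 ≤ s := by
    rw [hs, hs_exp]
    simp only [Complex.add_re, Complex.smul_re, smul_eq_mul]
    have := psd_re hM w
    nlinarith [mul_pos hε0 hμ]
  have hm_le_s : (star w ⬝ᵥ M *ᵥ w).re ≤ s := by
    rw [hs, hs_exp]
    simp only [Complex.add_re, Complex.smul_re, smul_eq_mul]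
    nlinarith [mul_pos hε0 hμ]
  have hsr : s ≤ Real.exp ε * r := by
    have h0 : s ≤ Real.sqrt (Real.exp ε * s) * Real.sqrt r := by
      have h1 := cs_psd hZpsd (N *ᵥ w) (M *ᵥ x)
      have h2 : s ≤ ‖star (N *ᵥ w) ⬝ᵥ Z *ᵥ (M *ᵥ x)‖ := by
        rw [hs, ← hs_eq]
        exact Complex.re_le_norm _
      refine (h2.trans h1).trans ?_
      rw [← hr]
      exact mul_le_mul_of_nonneg_right (Real.sqrt_le_sqrt hmid) (Real.sqrt_nonneg _)
    have hsq : s ^ 2 ≤ Real.exp ε * s * r := by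
      calc s ^ 2 ≤ (Real.sqrt (Real.exp ε * s) * Real.sqrt r) ^ 2 :=
            pow_le_pow_left₀ hs0 h0 2
        _ = Real.exp ε * s * r := by
            rw [mul_pow, Real.sq_sqrt (mul_nonneg (Real.exp_pos _).le hs0), Real.sq_sqrt hr0]
    rcases eq_or_lt_of_le hs0 with h | h
    · rw [← h]
      positivity
    · nlinarith [hsq, h]
  -- expansion of the error quadratic form
  have hTexp : (star (x - w) ⬝ᵥ M *ᵥ (x - w)).re = X - 2 * r + (star w ⬝ᵥ M *ᵥ w).re := by
    have e1 : star x ⬝ᵥ M *ᵥ w = star (M *ᵥ x) ⬝ᵥ Z *ᵥ (M *ᵥ x) := by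
      rw [← herm_left hM.1 x w, hw]
    have e3 : star w ⬝ᵥ M *ᵥ x = star (M *ᵥ x) ⬝ᵥ Z *ᵥ (M *ᵥ x) := by
      rw [hw, herm_left hZ]
    have key : star (x - w) ⬝ᵥ M *ᵥ (x - w)
        = star x ⬝ᵥ M *ᵥ x - star (M *ᵥ x) ⬝ᵥ Z *ᵥ (M *ᵥ x)
          - star (M *ᵥ x) ⬝ᵥ Z *ᵥ (M *ᵥ x) + star w ⬝ᵥ M *ᵥ w := by
      rw [Matrix.mulVec_sub, star_sub, sub_dotProduct, dotProduct_sub, dotProduct_sub,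
        e1, e3]
      ring
    rw [key]
    simp only [Complex.sub_re, Complex.add_re]
    rw [← hX, ← hr]
    ring
  -- final numeric assembly
  have hu : 1 - ε ≤ Real.exp (-ε) := by
    have := Real.add_one_le_exp (-ε)
    linarith
  have huu : Real.exp ε * Real.exp (-ε) = 1 := by
    rw [← Real.exp_add]
    simp
  have hexp2 : Real.exp ε ≤ 2 := by
    have h1 : ε < Real.log 2 := lt_trans hε (by
      have := Real.log_two_gt_d9
      linarith)
    have := (Real.exp_lt_exp.mpr h1).le
    rwa [Real.exp_log (by norm_num : (0:ℝ) < 2)] at this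
  set u : ℝ := Real.exp (-ε) with hudef
  have h6 : (Real.exp ε - 2) * r ≤ (Real.exp ε - 2) * (u * q) :=
    mul_le_mul_of_nonpos_left hr_ge (by linarith)
  have h7 : (Real.exp ε - 2) * (u * q) = (1 - 2 * u) * q := by
    have : (Real.exp ε - 2) * (u * q) = (Real.exp ε * u) * q - 2 * (u * q) := by ring
    rw [this, huu]
    ring
  have hfinal : X + (1 - 2 * u) * q ≤ 6 * ε * X := by
    have hP1 : 0 ≤ q * (2 * u - 1 - (1 - 2 * ε)) := mul_nonneg hq0 (by linarith)
    rcases le_total ((1 : ℝ) - 6 * ε) 0 with h | h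
    · have hP2 : 0 ≤ (6 * ε - 1) * X := mul_nonneg (by linarith) hX0
      nlinarith
    · have hP2 : 0 ≤ (1 - 6 * ε) * ((1 + ε) * q - X) := mul_nonneg h (by linarith)
      have hP3 : 0 ≤ q * ε := mul_nonneg hq0 hε0.le
      have hP4 : 0 ≤ q * ε ^ 2 := mul_nonneg hq0 (sq_nonneg _)
      nlinarith
  calc (star (x - w) ⬝ᵥ M *ᵥ (x - w)).re
      = X - 2 * r + (star w ⬝ᵥ M *ᵥ w).re := hTexp
    _ ≤ X - 2 * r + Real.exp ε * r := by linarith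
    _ = X + (Real.exp ε - 2) * r := by ring
    _ ≤ X + (1 - 2 * u) * q := by rw [← h7]; linarith
    _ ≤ 6 * ε * X := hfinal
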